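/- Let f₁,…,f_M : (Fin s → ℝ) → ℝ be measurable, square-integrable functions, and let h be the function realized with coefficient tensor A, where A admits a CP (rank-1) decomposition with r₀ terms: A(d) = Σ_{γ=1}^{r₀} a_γ · ∏_{i : Fin N} v_γ(d(i)) with a_γ ∈ ℝ, v_γ ∈ ℝ^M (this is the function realized by a shallow convolutional arithmetic circuit with r₀ hidden channels). Then for every partition of Fin N into disjoint subsets I and J with I ∪ J = univ, the separation rank satisfies sep(h; I, J) ≤ min{ M^{min(|I|,|J|)}, r₀ }; in particular it is at most linear in the network width r₀. -/

import Mathlib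

open MeasureTheory

noncomputable section

/-- Matricization of a tensor `A` of order `N` and dimension `M` in each mode, with
respect to a partition `(I, J)` of `Fin N` (given `I ∪ J = univ`). -/
def matricize {N M : ℕ} (A : (Fin N → Fin M) → ℝ) (I J : Finset (Fin N))
    (hU : I ∪ J = Finset.univ) :
    Matrix ({n // n ∈ I} → Fin M) ({n // n ∈ J} → Fin M) ℝ :=
  Matrix.of fun u v => A fun n =>
    if h : n ∈ I then u ⟨n, h⟩
    else v ⟨n, by
      have hn : n ∈ I ∪ J := by rw [hU]; exact Finset.mem_univ n
      exact (Finset.mem_union.mp hn).resolve_left h⟩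

/-- The function realized with coefficient tensor `A` and representation functions `f`. -/
def realized {N M s : ℕ} (f : Fin M → (Fin s → ℝ) → ℝ)
    (A : (Fin N → Fin M) → ℝ) : (Fin N → (Fin s → ℝ)) → ℝ :=
  fun x => ∑ d : Fin N → Fin M, A d * ∏ i, f (d i) (x i)

/-- Separation rank of `h` with respect to the partition `(I, J)`. -/
def sepRank {N s : ℕ} (I J : Finset (Fin N))
    (h : (Fin N → (Fin s → ℝ)) → ℝ) : ℕ :=
  sInf {R : ℕ |
    ∃ (g : Fin R → ({n // n ∈ I} → (Fin s → ℝ)) → ℝ)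
      (g' : Fin R → ({n // n ∈ J} → (Fin s → ℝ)) → ℝ),
      (∀ ν, Measurable (g ν)) ∧ (∀ ν, MemLp (g ν) 2 volume) ∧
      (∀ ν, Measurable (g' ν)) ∧ (∀ ν, MemLp (g' ν) 2 volume) ∧
      ∀ x : Fin N → (Fin s → ℝ),
        h x = ∑ ν, g ν (fun n => x n.1) * g' ν (fun n => x n.1)}

lemma prodEval_measurable {α : Type*} [Fintype α] {s : ℕ}
    (F : α → (Fin s → ℝ) → ℝ) (hFm : ∀ n, Measurable (F n)) :
    Measurable (fun y : α → (Fin s → ℝ) => ∏ n, F n (y n)) :=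
  Finset.measurable_prod _ fun n _ => (hFm n).comp (measurable_pi_apply n)

lemma prodEval_memℒp {α : Type*} [Fintype α] {s : ℕ}
    (F : α → (Fin s → ℝ) → ℝ) (hFm : ∀ n, Measurable (F n))
    (hF : ∀ n, MemLp (F n) 2 volume) :
    MemLp (fun y : α → (Fin s → ℝ) => ∏ n, F n (y n)) 2 volume := by
  rw [memLp_two_iff_integrable_sq (prodEval_measurable F hFm).aestronglyMeasurable]
  have h1 : ∀ n, Integrable (fun z : Fin s → ℝ => F n z ^ 2) := fun n =>
    (memLp_two_iff_integrable_sq (hFm n).aestronglyMeasurable).1 (hF n)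
  have := Integrable.fintype_prod (f := fun (n : α) (z : Fin s → ℝ) => F n z ^ 2) h1
  simpa [← Finset.prod_pow, volume_pi] using this

lemma sepRank_le_card {N s : ℕ} (I J : Finset (Fin N))
    (h : (Fin N → (Fin s → ℝ)) → ℝ) (κ : Type) [Fintype κ]
    (g : κ → ({n // n ∈ I} → (Fin s → ℝ)) → ℝ)
    (g' : κ → ({n // n ∈ J} → (Fin s → ℝ)) → ℝ)
    (hgm : ∀ ν, Measurable (g ν)) (hgL2 : ∀ ν, MemLp (g ν) 2 volume)
    (hg'm : ∀ ν, Measurable (g' ν)) (hg'L2 : ∀ ν, MemLp (g' ν) 2 volume)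
    (heq : ∀ x : Fin N → (Fin s → ℝ),
      h x = ∑ ν, g ν (fun n => x n.1) * g' ν (fun n => x n.1)) :
    sepRank I J h ≤ Fintype.card κ := by
  apply Nat.sInf_le
  refine ⟨fun ν => g ((Fintype.equivFin κ).symm ν),
    fun ν => g' ((Fintype.equivFin κ).symm ν),
    fun ν => hgm _, fun ν => hgL2 _, fun ν => hg'm _, fun ν => hg'L2 _, fun x => ?_⟩
  rw [heq x]
  exact (Fintype.sum_equiv (Fintype.equivFin κ).symm _ _ fun ν => rfl).symm

lemma prod_split {N : ℕ} (I J : Finset (Fin N)) (hdisj : Disjoint I J)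
    (hU : I ∪ J = Finset.univ) (G : Fin N → ℝ) :
    ∏ i, G i = (∏ n : {n // n ∈ I}, G n.1) * (∏ n : {n // n ∈ J}, G n.1) := by
  rw [Finset.prod_coe_sort, Finset.prod_coe_sort, ← Finset.prod_union hdisj, hU]

def glue {N M : ℕ} (I J : Finset (Fin N)) (hU : I ∪ J = Finset.univ)
    (u : {n // n ∈ I} → Fin M) (w : {n // n ∈ J} → Fin M) : Fin N → Fin M :=
  fun n => if h : n ∈ I then u ⟨n, h⟩ else w ⟨n, by
    have hn : n ∈ I ∪ J := by rw [hU]; exact Finset.mem_univ n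
    exact (Finset.mem_union.mp hn).resolve_left h⟩

lemma matricize_glue {N M : ℕ} (A : (Fin N → Fin M) → ℝ) (I J : Finset (Fin N))
    (hU : I ∪ J = Finset.univ) (u : {n // n ∈ I} → Fin M) (w : {n // n ∈ J} → Fin M) :
    matricize A I J hU u w = A (glue I J hU u w) := rfl

lemma glue_I {N M : ℕ} {I J : Finset (Fin N)} {hU : I ∪ J = Finset.univ}
    {u : {n // n ∈ I} → Fin M} {w : {n // n ∈ J} → Fin M} (n : {n // n ∈ I}) :
    glue I J hU u w n.1 = u n := by
  simp only [glue, dif_pos n.2]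

lemma glue_J {N M : ℕ} {I J : Finset (Fin N)} (hdisj : Disjoint I J)
    {hU : I ∪ J = Finset.univ}
    {u : {n // n ∈ I} → Fin M} {w : {n // n ∈ J} → Fin M} (n : {n // n ∈ J}) :
    glue I J hU u w n.1 = w n := by
  simp only [glue, dif_neg (Finset.disjoint_right.mp hdisj n.2)]

def splitEquiv {N M : ℕ} (I J : Finset (Fin N)) (hdisj : Disjoint I J)
    (hU : I ∪ J = Finset.univ) :
    (Fin N → Fin M) ≃ ({n // n ∈ I} → Fin M) × ({n // n ∈ J} → Fin M) where
  toFun d := (fun n => d n.1, fun n => d n.1)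
  invFun p := glue I J hU p.1 p.2
  left_inv d := by
    funext n
    simp only [glue]
    split <;> rfl
  right_inv p := by
    refine Prod.ext (funext fun n => ?_) (funext fun n => ?_)
    · exact glue_I (hU := hU) n
    · exact glue_J (hU := hU) hdisj n
set_option maxHeartbeats 1000000 in

theorem stmt8 (N M s r0 : ℕ) (f : Fin M → (Fin s → ℝ) → ℝ)
    (hfm : ∀ d, Measurable (f d)) (hfL2 : ∀ d, MemLp (f d) 2 volume)
    (a : Fin r0 → ℝ) (v : Fin r0 → Fin M → ℝ)
    (A : (Fin N → Fin M) → ℝ)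
    (hA : ∀ d : Fin N → Fin M, A d = ∑ γ, a γ * ∏ i, v γ (d i))
    (I J : Finset (Fin N)) (hdisj : Disjoint I J) (hU : I ∪ J = Finset.univ) :
    sepRank I J (realized f A) ≤ min (M ^ min I.card J.card) r0 := by
  classical
  -- The CP bound: r0 terms
  have bound0 : sepRank I J (realized f A) ≤ r0 := by
    have φm : ∀ γ, Measurable (fun z : Fin s → ℝ => ∑ m, v γ m * f m z) := fun γ =>
      Finset.measurable_sum _ fun m _ => (hfm m).const_mul _
    have φL2 : ∀ γ, MemLp (fun z : Fin s → ℝ => ∑ m, v γ m * f m z) 2 volume := fun γ =>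
      memLp_finset_sum _ fun m _ => (hfL2 m).const_mul _
    have key := sepRank_le_card I J (realized f A) (Fin r0)
      (fun γ y => a γ * ∏ n : {n // n ∈ I}, ∑ m, v γ m * f m (y n))
      (fun γ z => ∏ n : {n // n ∈ J}, ∑ m, v γ m * f m (z n))
      (fun γ => (prodEval_measurable _ fun n => φm γ).const_mul _)
      (fun γ => (prodEval_memℒp _ (fun n => φm γ) fun n => φL2 γ).const_mul _)
      (fun γ => prodEval_measurable _ fun n => φm γ)
      (fun γ => prodEval_memℒp _ (fun n => φm γ) fun n => φL2 γ)
      ?_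
    · simpa using key
    · intro x
      have expand : ∀ γ : Fin r0, a γ * ∏ i, (∑ m, v γ m * f m (x i))
          = ∑ d : Fin N → Fin M, a γ * ∏ i, (v γ (d i) * f (d i) (x i)) := by
        intro γ
        rw [Finset.prod_univ_sum (fun _ => Finset.univ) (fun i m => v γ m * f m (x i)),
          Fintype.piFinset_univ, Finset.mul_sum]
      calc realized f A x
          = ∑ d : Fin N → Fin M, ∑ γ, a γ * ∏ i, (v γ (d i) * f (d i) (x i)) := by
            simp only [realized, hA, Finset.sum_mul, mul_assoc, ← Finset.prod_mul_distrib]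
        _ = ∑ γ, ∑ d : Fin N → Fin M, a γ * ∏ i, (v γ (d i) * f (d i) (x i)) :=
            Finset.sum_comm
        _ = ∑ γ, a γ * ∏ i, (∑ m, v γ m * f m (x i)) :=
            Finset.sum_congr rfl fun γ _ => (expand γ).symm
        _ = ∑ γ, (a γ * ∏ n : {n // n ∈ I}, ∑ m, v γ m * f m (x n.1))
              * ∏ n : {n // n ∈ J}, ∑ m, v γ m * f m (x n.1) := by
            refine Finset.sum_congr rfl fun γ _ => ?_
            rw [prod_split I J hdisj hU (fun i => ∑ m, v γ m * f m (x i)), mul_assoc]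
  -- The I-side bound
  have boundI : sepRank I J (realized f A) ≤ M ^ I.card := by
    have key := sepRank_le_card I J (realized f A) ({n // n ∈ I} → Fin M)
      (fun u y => ∏ n, f (u n) (y n))
      (fun u z => ∑ w : {n // n ∈ J} → Fin M,
        matricize A I J hU u w * ∏ m, f (w m) (z m))
      (fun u => prodEval_measurable _ fun n => hfm _)
      (fun u => prodEval_memℒp _ (fun n => hfm _) fun n => hfL2 _)
      (fun u => Finset.measurable_sum _ fun w _ =>
        (prodEval_measurable _ fun m => hfm _).const_mul _)
      (fun u => memLp_finset_sum _ fun w _ =>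
        (prodEval_memℒp _ (fun m => hfm _) fun m => hfL2 _).const_mul _)
      ?_
    · simpa [Fintype.card_fun] using key
    · intro x
      
      rw [show (realized f A x)
          = ∑ p : ({n // n ∈ I} → Fin M) × ({n // n ∈ J} → Fin M),
              A (glue I J hU p.1 p.2) * ∏ i, f (glue I J hU p.1 p.2 i) (x i) from
        (Equiv.sum_comp (splitEquiv (M := M) I J hdisj hU).symm fun d => A d * ∏ i, f (d i) (x i)).symm,
        Fintype.sum_prod_type]
      refine Finset.sum_congr rfl fun u _ => ?_
      rw [Finset.mul_sum]
      refine Finset.sum_congr rfl fun w _ => ?_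
      rw [matricize_glue, prod_split I J hdisj hU (fun i => f (glue I J hU u w i) (x i))]
      simp only [glue_I, glue_J hdisj]
      ring
  -- The J-side bound
  have boundJ : sepRank I J (realized f A) ≤ M ^ J.card := by
    have key := sepRank_le_card I J (realized f A) ({n // n ∈ J} → Fin M)
      (fun w y => ∑ u : {n // n ∈ I} → Fin M,
        matricize A I J hU u w * ∏ n, f (u n) (y n))
      (fun w z => ∏ m, f (w m) (z m))
      (fun w => Finset.measurable_sum _ fun u _ =>
        (prodEval_measurable _ fun n => hfm _).const_mul _)
      (fun w => memLp_finset_sum _ fun u _ =>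
        (prodEval_memℒp _ (fun n => hfm _) fun n => hfL2 _).const_mul _)
      (fun w => prodEval_measurable _ fun m => hfm _)
      (fun w => prodEval_memℒp _ (fun m => hfm _) fun m => hfL2 _)
      ?_
    · simpa [Fintype.card_fun] using key
    · intro x
      
      rw [show (realized f A x)
          = ∑ p : ({n // n ∈ I} → Fin M) × ({n // n ∈ J} → Fin M),
              A (glue I J hU p.1 p.2) * ∏ i, f (glue I J hU p.1 p.2 i) (x i) from
        (Equiv.sum_comp (splitEquiv (M := M) I J hdisj hU).symm fun d => A d * ∏ i, f (d i) (x i)).symm,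
        Fintype.sum_prod_type_right]
      refine Finset.sum_congr rfl fun w _ => ?_
      rw [Finset.sum_mul]
      refine Finset.sum_congr rfl fun u _ => ?_
      rw [matricize_glue, prod_split I J hdisj hU (fun i => f (glue I J hU u w i) (x i))]
      simp only [glue_I, glue_J hdisj]
      ring
  rcases le_total r0 (M ^ min I.card J.card) with hc | hc
  · rw [min_eq_right hc]; exact bound0
  · rw [min_eq_left hc]
    rcases le_total I.card J.card with hc2 | hc2
    · rw [min_eq_left hc2]; exact boundI
    · rw [min_eq_right hc2]; exact boundJ
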